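/- Let X₁=E₁₂, X₂=E₂₃, X₃=E₁₃, Y₁=E₂₁, Y₂=E₃₂, Y₃=E₃₁, H₁=E₁₁−E₂₂, H₂=E₂₂−E₃₃ be the standard basis of 𝔰𝔩₃. Let V₁ = V₂ = ℂ³, with π₁(Z)u = Zu on V₁ and π₂(Z)u = −Zᵀu on V₂; let e₁,e₂,e₃ be the standard basis of V₁ and f₁=e₃, f₂=−e₂, f₃=e₁ a basis of V₂. For m₁,m₂ ∈ ℕ₀, let ψ₁ and ψ₂ be the induced representations of 𝔰𝔩₃ on the symmetric powers Sym^{m₁}(V₁) and Sym^{m₂}(V₂) (acting as derivations on products), and let ψ = ψ₁ ⊗ ψ₂ on Sym^{m₁}(V₁) ⊗ Sym^{m₂}(V₂), extended to U(𝔰𝔩₃); set v_{i,j,k} = ψ(Y₁^i Y₂^j Y₃^k)(e₁^{m₁} ⊗ f₁^{m₂}) for i,j,k ∈ ℕ₀. Then for every d ∈ ℕ₀ with m₁ ≥ d and m₂ ≥ d, the vectors v_{k,ℓ,m} over all k,ℓ,m ∈ ℕ₀ with k + ℓ + m ≤ d are linearly independent. -/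

import Mathlib

open scoped TensorProduct

/-- The polynomial realization of symmetric powers: the polynomial ring in the three basis
vectors of `ℂ³`, whose degree-`m` homogeneous component is `Sym^m(ℂ³)`. -/
abbrev PolySpace : Type := MvPolynomial (Fin 3) ℂ

/-- The derivation action on polynomials induced by a linear action on `ℂ³` with matrix `M`
in the chosen basis `w₀, w₁, w₂`: it sends `w_j` to `Σ_i M i j • w_i` and acts by the
Leibniz rule on products. -/
noncomputable def derOp (M : Matrix (Fin 3) (Fin 3) ℂ) : Module.End ℂ PolySpace :=
  ∑ i : Fin 3, ∑ j : Fin 3, M i j •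
    ((LinearMap.mulLeft ℂ (MvPolynomial.X i)).comp (MvPolynomial.pderiv j).toLinearMap)

/-- The change-of-basis matrix from the basis `f₁ = e₃, f₂ = -e₂, f₃ = e₁` to the standard
basis of `ℂ³` (its own inverse). -/
noncomputable def Bmat : Matrix (Fin 3) (Fin 3) ℂ := !![0, 0, 1; 0, -1, 0; 1, 0, 0]

/-- The representation `ψ = ψ₁ ⊗ ψ₂` of a matrix `Z ∈ 𝔰𝔩₃` on
`Sym(V₁) ⊗ Sym(V₂)`: `ψ₁` is the derivation action of `π₁(Z) = Z` (in the basis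
`e₁, e₂, e₃`), and `ψ₂` is the derivation action of `π₂(Z) = -Zᵀ` written in the basis
`f₁ = e₃, f₂ = -e₂, f₃ = e₁`, i.e. with matrix `B (-Zᵀ) B`. -/
noncomputable def psiOp (Z : Matrix (Fin 3) (Fin 3) ℂ) :
    Module.End ℂ (PolySpace ⊗[ℂ] PolySpace) :=
  LinearMap.rTensor PolySpace (derOp Z) +
    LinearMap.lTensor PolySpace (derOp (Bmat * (-(Matrix.transpose Z)) * Bmat))

noncomputable def X₁mat : Matrix (Fin 3) (Fin 3) ℂ := Matrix.single 0 1 1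
noncomputable def X₂mat : Matrix (Fin 3) (Fin 3) ℂ := Matrix.single 1 2 1
noncomputable def X₃mat : Matrix (Fin 3) (Fin 3) ℂ := Matrix.single 0 2 1
noncomputable def Y₁mat : Matrix (Fin 3) (Fin 3) ℂ := Matrix.single 1 0 1
noncomputable def Y₂mat : Matrix (Fin 3) (Fin 3) ℂ := Matrix.single 2 1 1
noncomputable def Y₃mat : Matrix (Fin 3) (Fin 3) ℂ := Matrix.single 2 0 1
noncomputable def H₁mat : Matrix (Fin 3) (Fin 3) ℂ :=
  Matrix.single 0 0 1 - Matrix.single 1 1 1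
noncomputable def H₂mat : Matrix (Fin 3) (Fin 3) ℂ :=
  Matrix.single 1 1 1 - Matrix.single 2 2 1

/-- The vector `v_{k,ℓ,m} = ψ(Y₁^k Y₂^ℓ Y₃^m)(e₁^{m₁} ⊗ f₁^{m₂})`. -/
noncomputable def vklm (m₁ m₂ k ℓ m : ℕ) : PolySpace ⊗[ℂ] PolySpace :=
  (psiOp Y₁mat ^ k * psiOp Y₂mat ^ ℓ * psiOp Y₃mat ^ m)
    ((MvPolynomial.X 0 ^ m₁) ⊗ₜ[ℂ] (MvPolynomial.X 0 ^ m₂))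

/-! ### Auxiliary machinery -/

open MvPolynomial LinearMap Finset

/-- The basic operator `X i ∂ⱼ`. -/
noncomputable def Dop (i j : Fin 3) : Module.End ℂ PolySpace :=
  (LinearMap.mulLeft ℂ (MvPolynomial.X i)).comp (MvPolynomial.pderiv j).toLinearMap

lemma Dop_apply (i j : Fin 3) (p : PolySpace) : Dop i j p = X i * pderiv j p := rfl

lemma derOp_Y₁ : derOp Y₁mat = Dop 1 0 := by
  simp [derOp, Dop, Fin.sum_univ_three, Y₁mat, Matrix.single, Matrix.of_apply]

lemma derOp_Y₂ : derOp Y₂mat = Dop 2 1 := by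
  simp [derOp, Dop, Fin.sum_univ_three, Y₂mat, Matrix.single, Matrix.of_apply]

lemma derOp_Y₃ : derOp Y₃mat = Dop 2 0 := by
  simp [derOp, Dop, Fin.sum_univ_three, Y₃mat, Matrix.single, Matrix.of_apply]

lemma derOp_Y₁' : derOp (Bmat * (-(Matrix.transpose Y₁mat)) * Bmat) = Dop 2 1 := by
  simp [derOp, Dop, Fin.sum_univ_three, Y₁mat, Bmat, Matrix.single, Matrix.mul_apply,
    Matrix.transpose_apply, Matrix.vecMul, dotProduct, Matrix.of_apply, Matrix.cons_val_zero,
    Matrix.cons_val_one, Matrix.head_cons]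

lemma derOp_Y₂' : derOp (Bmat * (-(Matrix.transpose Y₂mat)) * Bmat) = Dop 1 0 := by
  simp [derOp, Dop, Fin.sum_univ_three, Y₂mat, Bmat, Matrix.single, Matrix.mul_apply,
    Matrix.transpose_apply, Matrix.vecMul, dotProduct, Matrix.of_apply, Matrix.cons_val_zero,
    Matrix.cons_val_one, Matrix.head_cons]

lemma derOp_Y₃' : derOp (Bmat * (-(Matrix.transpose Y₃mat)) * Bmat) = -Dop 2 0 := by
  simp [derOp, Dop, Fin.sum_univ_three, Y₃mat, Bmat, Matrix.single, Matrix.mul_apply,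
    Matrix.transpose_apply, Matrix.vecMul, dotProduct, Matrix.of_apply, Matrix.cons_val_zero,
    Matrix.cons_val_one, Matrix.head_cons, neg_smul, one_smul]
  module

lemma psi_Y₁ : psiOp Y₁mat = rTensor PolySpace (Dop 1 0) + lTensor PolySpace (Dop 2 1) := by
  rw [psiOp, derOp_Y₁, derOp_Y₁']

lemma psi_Y₂ : psiOp Y₂mat = rTensor PolySpace (Dop 2 1) + lTensor PolySpace (Dop 1 0) := by
  rw [psiOp, derOp_Y₂, derOp_Y₂']

lemma psi_Y₃ : psiOp Y₃mat = rTensor PolySpace (Dop 2 0) + lTensor PolySpace (-Dop 2 0) := by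
  rw [psiOp, derOp_Y₃, derOp_Y₃']

/-! Tensor-operator lemmas -/

lemma comm_rl (f g : Module.End ℂ PolySpace) :
    Commute (rTensor PolySpace f) (lTensor PolySpace g) := by
  unfold Commute SemiconjBy
  ext p q
  simp

lemma rT_pow_apply (f : Module.End ℂ PolySpace) (n : ℕ) (p q : PolySpace) :
    ((rTensor PolySpace f)^n) (p ⊗ₜ[ℂ] q) = ((f^n) p) ⊗ₜ[ℂ] q := by
  induction n with
  | zero => simp
  | succ n ih => rw [pow_succ', pow_succ', Module.End.mul_apply, Module.End.mul_apply, ih]; simp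

lemma lT_pow_apply (g : Module.End ℂ PolySpace) (n : ℕ) (p q : PolySpace) :
    ((lTensor PolySpace g)^n) (p ⊗ₜ[ℂ] q) = p ⊗ₜ[ℂ] ((g^n) q) := by
  induction n with
  | zero => simp
  | succ n ih => rw [pow_succ', pow_succ', Module.End.mul_apply, Module.End.mul_apply, ih]; simp

lemma addpow (f g : Module.End ℂ PolySpace) (n : ℕ) (p q : PolySpace) :
    ((rTensor PolySpace f + lTensor PolySpace g)^n) (p ⊗ₜ[ℂ] q)
      = ∑ i ∈ Finset.range (n+1), (n.choose i : ℂ) • ((f^i) p ⊗ₜ[ℂ] (g^(n-i)) q) := by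
  rw [(comm_rl f g).add_pow]
  simp only [LinearMap.sum_apply, Module.End.mul_apply, Module.End.natCast_apply, map_nsmul,
    rT_pow_apply, lT_pow_apply, Nat.cast_smul_eq_nsmul]

lemma killed (f g : Module.End ℂ PolySpace) (n : ℕ) (p q : PolySpace) (h : f p = 0) :
    ((rTensor PolySpace f + lTensor PolySpace g)^n) (p ⊗ₜ[ℂ] q) = p ⊗ₜ[ℂ] (g^n) q := by
  induction n with
  | zero => simp
  | succ n ih =>
      rw [pow_succ', Module.End.mul_apply, ih]
      simp [h, pow_succ', Module.End.mul_apply]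

lemma negpow_apply (f : Module.End ℂ PolySpace) (u : ℕ) (x : PolySpace) :
    ((-f)^u) x = ((-1 : ℂ)^u) • (f^u) x := by
  induction u with
  | zero => simp
  | succ u ih =>
      rw [pow_succ', Module.End.mul_apply, ih, map_smul, LinearMap.neg_apply,
        pow_succ' f, Module.End.mul_apply]
      simp [pow_succ, smul_smul, mul_comm]

/-! Action of `Dop` powers on monomials -/

lemma pd_ne (i j : Fin 3) (h : i ≠ j) (n : ℕ) : pderiv j ((X i : PolySpace)^n) = 0 := by
  rw [pderiv_pow, pderiv_X, Pi.single_eq_of_ne h]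
  simp

lemma pderiv_X_pow' (j : Fin 3) (N : ℕ) :
    pderiv j ((X j : PolySpace) ^ N) = (N : ℂ) • X j ^ (N - 1) := by
  rw [pderiv_pow, pderiv_X_self, Nat.cast_smul_eq_nsmul]
  simp

lemma Dop_pow (i j : Fin 3) (hij : i ≠ j) (N n : ℕ) (R : PolySpace) (hR : pderiv j R = 0) :
    ((Dop i j)^n) (X j ^ N * R)
      = (Nat.descFactorial N n : ℂ) • (X j ^ (N - n) * X i ^ n * R) := by
  induction n with
  | zero => simp
  | succ n ih =>
      rw [pow_succ', Module.End.mul_apply, ih, map_smul, Dop_apply]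
      rw [pderiv_mul, pderiv_mul, pderiv_X_pow', pderiv_pow, pderiv_X, hR,
        Pi.single_eq_of_ne hij]
      rw [Nat.descFactorial_succ, Nat.cast_mul, mul_smul]
      rw [show N - (n+1) = N - n - 1 by omega]
      simp only [mul_zero, zero_mul, add_zero, smul_zero, map_zero, smul_eq_C_mul]
      ring

lemma Dop_pow_a (s N : ℕ) :
    ((Dop 2 0)^s) ((X 0 : PolySpace) ^ N)
      = (Nat.descFactorial N s : ℂ) • (X 0 ^ (N - s) * X 2 ^ s) := by
  have := Dop_pow 2 0 (by decide) N s 1 (by simp)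
  simpa using this

lemma Dop_pow_b (t a c : ℕ) :
    ((Dop 1 0)^t) ((X 0 : PolySpace) ^ a * X 2 ^ c)
      = (Nat.descFactorial a t : ℂ) • (X 0 ^ (a - t) * X 1 ^ t * X 2 ^ c) :=
  Dop_pow 1 0 (by decide) a t (X 2 ^ c) (pd_ne 2 0 (by decide) c)

lemma Dop_pow_c (u a b c : ℕ) :
    ((Dop 2 1)^u) ((X 0 : PolySpace) ^ a * X 1 ^ b * X 2 ^ c)
      = (Nat.descFactorial b u : ℂ) • (X 0 ^ a * X 1 ^ (b - u) * X 2 ^ (c + u)) := by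
  have h : ((X 0 : PolySpace) ^ a * X 1 ^ b * X 2 ^ c) = X 1 ^ b * (X 0 ^ a * X 2 ^ c) := by ring
  have hR : pderiv 1 ((X 0 : PolySpace) ^ a * X 2 ^ c) = 0 := by
    rw [pderiv_mul, pd_ne 0 1 (by decide), pd_ne 2 1 (by decide)]; simp
  rw [h, Dop_pow 2 1 (by decide) b u _ hR]
  congr 1
  ring

lemma D21_kills (a c : ℕ) : Dop 2 1 ((X 0 : PolySpace) ^ a * X 2 ^ c) = 0 := by
  rw [Dop_apply, pderiv_mul, pd_ne 0 1 (by decide), pd_ne 2 1 (by decide)]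
  simp

/-! ### The explicit formula for `vklm` -/

lemma vformula (m₁ m₂ k ℓ m : ℕ) :
    vklm m₁ m₂ k ℓ m
      = ∑ s ∈ Finset.range (m+1), ∑ t ∈ Finset.range (k+1),
          ((m.choose s : ℂ) * (k.choose t : ℂ) * (-1 : ℂ)^(m-s) *
            (Nat.descFactorial m₁ s : ℂ) * (Nat.descFactorial (m₁-s) t : ℂ) *
            (Nat.descFactorial m₂ (m-s) : ℂ) * (Nat.descFactorial (m₂-(m-s)) ℓ : ℂ) *
            (Nat.descFactorial ℓ (k-t) : ℂ)) •
          ((X 0 ^ (m₁-s-t) * X 1 ^ t * X 2 ^ s) ⊗ₜ[ℂ]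
           (X 0 ^ (m₂-(m-s)-ℓ) * X 1 ^ (ℓ-(k-t)) * X 2 ^ ((m-s)+(k-t)))) := by
  rw [vklm, Module.End.mul_apply, Module.End.mul_apply, psi_Y₃, addpow]
  simp only [negpow_apply, Dop_pow_a, mul_one, ← TensorProduct.smul_tmul',
    TensorProduct.tmul_smul, smul_smul, map_sum, map_smul]
  refine Finset.sum_congr rfl (fun s hs => ?_)
  rw [psi_Y₂]
  rw [killed (Dop 2 1) (Dop 1 0) ℓ _ _ (D21_kills (m₁ - s) s)]
  rw [Dop_pow_b]
  rw [TensorProduct.tmul_smul]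
  rw [map_smul]
  rw [psi_Y₁]
  rw [addpow]
  rw [Finset.smul_sum, Finset.smul_sum]
  refine Finset.sum_congr rfl (fun t ht => ?_)
  rw [Dop_pow_b, Dop_pow_c]
  simp only [← TensorProduct.smul_tmul', TensorProduct.tmul_smul, smul_smul]
  congr 1
  ring

/-! ### The coefficient functionals -/

/-- The linear functional taking the coefficient of `X0^a X1^b X2^c ⊗ X0^a' X1^b' X2^c'`. -/
noncomputable def Lfun (a b c a' b' c' : ℕ) : (PolySpace ⊗[ℂ] PolySpace) →ₗ[ℂ] ℂ :=
  (TensorProduct.lid ℂ ℂ).toLinearMap.comp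
    (TensorProduct.map
      (MvPolynomial.lcoeff ℂ (Finsupp.single 0 a + Finsupp.single 1 b + Finsupp.single 2 c))
      (MvPolynomial.lcoeff ℂ (Finsupp.single 0 a' + Finsupp.single 1 b' + Finsupp.single 2 c')))

lemma single_eq_iff (a b c a' b' c' : ℕ) :
    (Finsupp.single (0 : Fin 3) a + Finsupp.single 1 b + Finsupp.single 2 c
      = Finsupp.single 0 a' + Finsupp.single 1 b' + Finsupp.single 2 c')
    ↔ (a = a' ∧ b = b' ∧ c = c') := by
  constructor
  · intro h
    refine ⟨?_, ?_, ?_⟩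
    · have := DFunLike.congr_fun h 0
      simpa [Finsupp.single_apply] using this
    · have := DFunLike.congr_fun h 1
      simpa [Finsupp.single_apply] using this
    · have := DFunLike.congr_fun h 2
      simpa [Finsupp.single_apply] using this
  · rintro ⟨rfl, rfl, rfl⟩; rfl

lemma coeff_XXX (a b c a' b' c' : ℕ) :
    MvPolynomial.coeff (Finsupp.single 0 a' + Finsupp.single 1 b' + Finsupp.single 2 c')
      ((X 0)^a * (X 1)^b * (X 2)^c : PolySpace)
    = if a = a' ∧ b = b' ∧ c = c' then 1 else 0 := by
  rw [X_pow_eq_monomial, X_pow_eq_monomial, X_pow_eq_monomial, monomial_mul, monomial_mul,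
    coeff_monomial]
  simp only [mul_one]
  exact if_congr (single_eq_iff a b c a' b' c') rfl rfl

lemma Lfun_tmul (a b c a' b' c' : ℕ) (p q : PolySpace) :
    Lfun a b c a' b' c' (p ⊗ₜ[ℂ] q)
      = MvPolynomial.coeff (Finsupp.single 0 a + Finsupp.single 1 b + Finsupp.single 2 c) p *
        MvPolynomial.coeff (Finsupp.single 0 a' + Finsupp.single 1 b' + Finsupp.single 2 c') q := by
  simp [Lfun, MvPolynomial.lcoeff, smul_eq_mul]

/-! ### The pairing computation -/

/-- The functional adapted to the index `(k, ℓ, m)`. -/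
noncomputable def Lklm (m₁ m₂ k ℓ m : ℕ) : (PolySpace ⊗[ℂ] PolySpace) →ₗ[ℂ] ℂ :=
  Lfun (m₁ - m - k) k m (m₂ - ℓ) ℓ 0

lemma pairing_offdiag (m₁ m₂ k ℓ m k' ℓ' m' : ℕ) (hne : (k, ℓ, m) ≠ (k', ℓ', m')) :
    Lklm m₁ m₂ k ℓ m (vklm m₁ m₂ k' ℓ' m') = 0 := by
  rw [vformula, map_sum]
  refine Finset.sum_eq_zero (fun s hs => ?_)
  rw [map_sum]
  refine Finset.sum_eq_zero (fun t ht => ?_)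
  rw [map_smul, Lklm, Lfun_tmul, coeff_XXX, coeff_XXX]
  simp only [Finset.mem_range] at hs ht
  by_cases h1 : m₁ - s - t = m₁ - m - k ∧ t = k ∧ s = m
  · by_cases h2 : m₂ - (m' - s) - ℓ' = m₂ - ℓ ∧ ℓ' - (k' - t) = ℓ ∧ (m' - s) + (k' - t) = 0
    · exfalso
      apply hne
      obtain ⟨h1a, h1b, h1c⟩ := h1
      obtain ⟨h2a, h2b, h2c⟩ := h2
      have e1 : k = k' := by omega
      have e2 : m = m' := by omega
      have e3 : ℓ = ℓ' := by omega
      rw [e1, e2, e3]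
    · rw [if_neg h2]
      simp
  · rw [if_neg h1]
    simp

lemma pairing_diag (d m₁ m₂ k ℓ m : ℕ) (hd : k + ℓ + m ≤ d) (h₁ : d ≤ m₁) (h₂ : d ≤ m₂) :
    Lklm m₁ m₂ k ℓ m (vklm m₁ m₂ k ℓ m)
      = (Nat.descFactorial m₁ m : ℂ) * (Nat.descFactorial (m₁-m) k : ℂ) *
        (Nat.descFactorial m₂ ℓ : ℂ) := by
  rw [vformula, map_sum]
  rw [Finset.sum_eq_single_of_mem m (Finset.self_mem_range_succ m)]
  · rw [map_sum, Finset.sum_eq_single_of_mem k (Finset.self_mem_range_succ k)]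
    · rw [map_smul, Lklm, Lfun_tmul, coeff_XXX, coeff_XXX]
      rw [if_pos ⟨rfl, rfl, rfl⟩, if_pos ⟨by omega, by omega, by omega⟩]
      simp [Nat.sub_self]
    · intro t ht htne
      rw [map_smul, Lklm, Lfun_tmul, coeff_XXX, coeff_XXX]
      rw [if_neg (by tauto)]
      simp
  · intro s hs hsne
    rw [map_sum]
    refine Finset.sum_eq_zero (fun t ht => ?_)
    rw [map_smul, Lklm, Lfun_tmul, coeff_XXX, coeff_XXX]
    rw [if_neg (by tauto)]
    simp

lemma pairing_diag_ne_zero (d m₁ m₂ k ℓ m : ℕ) (hd : k + ℓ + m ≤ d) (h₁ : d ≤ m₁) (h₂ : d ≤ m₂) :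
    Lklm m₁ m₂ k ℓ m (vklm m₁ m₂ k ℓ m) ≠ 0 := by
  rw [pairing_diag d m₁ m₂ k ℓ m hd h₁ h₂]
  have p1 : Nat.descFactorial m₁ m ≠ 0 := by
    rw [Ne, Nat.descFactorial_eq_zero_iff_lt]; omega
  have p2 : Nat.descFactorial (m₁-m) k ≠ 0 := by
    rw [Ne, Nat.descFactorial_eq_zero_iff_lt]; omega
  have p3 : Nat.descFactorial m₂ ℓ ≠ 0 := by
    rw [Ne, Nat.descFactorial_eq_zero_iff_lt]; omega
  have : (Nat.descFactorial m₁ m) * (Nat.descFactorial (m₁-m) k) * (Nat.descFactorial m₂ ℓ) ≠ 0 :=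
    mul_ne_zero (mul_ne_zero p1 p2) p3
  exact_mod_cast this

/-! ### Main theorem -/

/-- for `m₁ ≥ d` and `m₂ ≥ d`, the vectors `v_{k,ℓ,m}` with `k + ℓ + m ≤ d`
are linearly independent. -/
theorem stmt_12 (d m₁ m₂ : ℕ) (h₁ : d ≤ m₁) (h₂ : d ≤ m₂) :
    LinearIndependent ℂ
      (fun x : {klm : ℕ × ℕ × ℕ // klm.1 + klm.2.1 + klm.2.2 ≤ d} =>
        vklm m₁ m₂ x.val.1 x.val.2.1 x.val.2.2) := by
  rw [linearIndependent_iff']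
  intro s g hsum i hi
  set L := Lklm m₁ m₂ i.val.1 i.val.2.1 i.val.2.2 with hL
  have happ := congrArg L hsum
  rw [map_sum, map_zero] at happ
  rw [Finset.sum_eq_single_of_mem i hi] at happ
  · rw [map_smul, smul_eq_mul] at happ
    have hdne := pairing_diag_ne_zero d m₁ m₂ i.val.1 i.val.2.1 i.val.2.2 i.prop h₁ h₂
    exact (mul_eq_zero.mp happ).resolve_right hdne
  · intro j hj hjne
    rw [map_smul, hL, pairing_offdiag]
    · simp
    · intro hc
      exact hjne (Subtype.ext hc.symm)
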